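/- Let M be an L-structure, m ≥ 1, and A ⊆ M^m an infinite set such that for every k ≥ 2 and every k-hypergraph E on A there is a set X ⊆ (M^m)^k definable with parameters in M with: E(a₁,…,a_k) if and only if (a₁,…,a_k) ∈ X, for all a₁,…,a_k ∈ A. Then there is a sequence (c_i)_{i<ω} of elements of M^{2m} such that for every k ≥ 1 and every set S ⊆ ω^k there is a set Y ⊆ (M^{2m})^k definable with parameters in M with: (i₁,…,i_k) ∈ S if and only if (c_{i₁},…,c_{i_k}) ∈ Y, for all i₁,…,i_k < ω. -/

import Mathlib

open FirstOrder FirstOrder.Language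

/-- `E` is a `k`-hypergraph on the set `A`: a symmetric `k`-ary relation, supported on tuples
of pairwise distinct elements of `A`. -/
def IsHypergraphOn {V : Type*} (k : ℕ) (A : Set V) (E : (Fin k → V) → Prop) : Prop :=
  (∀ a : Fin k → V, E a → ∀ i : Fin k, a i ∈ A) ∧
  (∀ a : Fin k → V, E a → Function.Injective a) ∧
  (∀ (σ : Equiv.Perm (Fin k)) (a : Fin k → V), E a → E (a ∘ σ))

/-- Index encoding of a strictly monotone tuple `u` as a `2ρ`-tuple of natural numbers. -/
private def encIdx {ρ : ℕ} (u : Fin ρ → ℕ) (z : Fin (2 * ρ)) : ℕ :=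
  2 * u ⟨z.val / 2, by have := z.isLt; omega⟩ + z.val % 2

private lemma vec3_inj {i j : ℕ} (hij : i ≠ j) :
    Function.Injective (![2 * i, 2 * i + 1, 2 * j]) := by
  intro z z' h
  fin_cases z <;> fin_cases z' <;> simp_all <;> omega

private lemma range_eq_of_comp_perm {V : Type*} {n : ℕ} {a : ℕ → V}
    (ha : Function.Injective a) {p : Fin n → ℕ} {q : Fin n → ℕ} (σ : Equiv.Perm (Fin n))
    (h : (fun z => a (p z)) = (fun z => a (q z)) ∘ σ) : Set.range p = Set.range q := by
  have h1 : a ∘ p = (a ∘ q) ∘ σ := h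
  have h2 : Set.range (a ∘ p) = Set.range (a ∘ q) := by
    rw [h1]; exact σ.surjective.range_comp _
  rw [Set.range_comp, Set.range_comp] at h2
  exact Set.image_injective.2 ha h2

private lemma encIdx_inj {ρ : ℕ} {u : Fin ρ → ℕ} (hu : Function.Injective u) :
    Function.Injective (encIdx u) := by
  intro z z' h
  unfold encIdx at h
  have h1 : z.val % 2 = z'.val % 2 ∧
      u ⟨z.val / 2, by have := z.isLt; omega⟩ = u ⟨z'.val / 2, by have := z'.isLt; omega⟩ := by
    constructor <;> omega
  have h2 := hu h1.2
  have h3 : z.val / 2 = z'.val / 2 := congrArg Fin.val h2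
  ext
  omega

private lemma encIdx_range {ρ : ℕ} {u u' : Fin ρ → ℕ}
    (h : Set.range (encIdx u) = Set.range (encIdx u')) : ∀ i, u i ∈ Set.range u' := by
  intro i
  have h2i : 2 * i.val < 2 * ρ := by have := i.isLt; omega
  have hmem : encIdx u ⟨2 * i.val, h2i⟩ ∈ Set.range (encIdx u') := h ▸ Set.mem_range_self _
  obtain ⟨z, hz⟩ := hmem
  have e1 : encIdx u ⟨2 * i.val, h2i⟩ = 2 * u i := by
    unfold encIdx
    have h1 : 2 * i.val / 2 = i.val := by omega
    have h2 : 2 * i.val % 2 = 0 := by omega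
    simp only [h1, h2, Fin.eta, add_zero]
  rw [e1] at hz
  unfold encIdx at hz
  refine ⟨⟨z.val / 2, by have := z.isLt; omega⟩, by omega⟩

section Code

variable (L : Language) (M : Type*) [L.Structure M] (m : ℕ) (A : Set (Fin m → M))

private lemma strict_code
    (hcode : ∀ (k : ℕ), 2 ≤ k → ∀ E : (Fin k → Fin m → M) → Prop, IsHypergraphOn k A E →
      ∃ X : Set (Fin k × Fin m → M), Set.Definable (Set.univ : Set M) L X ∧
        ∀ a : Fin k → Fin m → M, (∀ i, a i ∈ A) →
          (E a ↔ (fun p : Fin k × Fin m => a p.1 p.2) ∈ X))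
    (a : ℕ → Fin m → M) (ha : Function.Injective a) (haA : ∀ n, a n ∈ A)
    (ρ : ℕ) (hρ : 1 ≤ ρ) (W : Set (Fin ρ → ℕ)) (hW : ∀ u ∈ W, StrictMono u) :
    ∃ X : Set (Fin (2 * ρ) × Fin m → M), Set.Definable (Set.univ : Set M) L X ∧
      ∀ u : Fin ρ → ℕ, StrictMono u →
        ((fun p : Fin (2 * ρ) × Fin m => a (encIdx u p.1) p.2) ∈ X ↔ u ∈ W) := by
  set E : (Fin (2 * ρ) → Fin m → M) → Prop :=
    fun b => ∃ σ : Equiv.Perm (Fin (2 * ρ)), ∃ u ∈ W, b = (fun z => a (encIdx u z)) ∘ σ with hE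
  have hHG : IsHypergraphOn (2 * ρ) A E := by
    refine ⟨?_, ?_, ?_⟩
    · rintro b ⟨σ, u, hu, rfl⟩ i
      exact haA _
    · rintro b ⟨σ, u, hu, rfl⟩
      exact (ha.comp (encIdx_inj (hW u hu).injective)).comp σ.injective
    · rintro σ b ⟨σ', u, hu, rfl⟩
      exact ⟨σ.trans σ', u, hu, rfl⟩
  obtain ⟨X, hXdef, hXtr⟩ := hcode (2 * ρ) (by omega) E hHG
  refine ⟨X, hXdef, fun u hu => ?_⟩
  have hb : ∀ i, (fun z => a (encIdx u z)) i ∈ A := fun i => haA _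
  rw [← hXtr _ hb]
  constructor
  · rintro ⟨σ, u', hu', heq⟩
    have hr := range_eq_of_comp_perm ha σ heq
    have h1 : Set.range u = Set.range u' := by
      apply Set.eq_of_subset_of_subset
      · rintro x ⟨i, rfl⟩; exact encIdx_range hr i
      · rintro x ⟨i, rfl⟩; exact encIdx_range hr.symm i
    have inst : WellFoundedLT (Fin ρ) := inferInstance
    have h2 : u = u' := (hu.range_inj (hW u' hu')).1 h1
    rwa [h2]
  · intro huW
    exact ⟨Equiv.refl _, u, huW, rfl⟩

private lemma order_code
    (hcode : ∀ (k : ℕ), 2 ≤ k → ∀ E : (Fin k → Fin m → M) → Prop, IsHypergraphOn k A E →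
      ∃ X : Set (Fin k × Fin m → M), Set.Definable (Set.univ : Set M) L X ∧
        ∀ a : Fin k → Fin m → M, (∀ i, a i ∈ A) →
          (E a ↔ (fun p : Fin k × Fin m => a p.1 p.2) ∈ X))
    (a : ℕ → Fin m → M) (ha : Function.Injective a) (haA : ∀ n, a n ∈ A) :
    ∃ XO : Set (Fin 3 × Fin m → M), Set.Definable (Set.univ : Set M) L XO ∧
      ∀ i j : ℕ, i ≠ j →
        ((fun p : Fin 3 × Fin m => a (![2 * i, 2 * i + 1, 2 * j] p.1) p.2) ∈ XO ↔ i < j) := by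
  set E : (Fin 3 → Fin m → M) → Prop :=
    fun b => ∃ σ : Equiv.Perm (Fin 3), ∃ i j : ℕ, i < j ∧
      b = (fun z => a (![2 * i, 2 * i + 1, 2 * j] z)) ∘ σ with hE
  have hHG : IsHypergraphOn 3 A E := by
    refine ⟨?_, ?_, ?_⟩
    · rintro b ⟨σ, i, j, hij, rfl⟩ z
      exact haA _
    · rintro b ⟨σ, i, j, hij, rfl⟩
      exact (ha.comp (vec3_inj hij.ne)).comp σ.injective
    · rintro σ b ⟨σ', i, j, hij, rfl⟩
      exact ⟨σ.trans σ', i, j, hij, rfl⟩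
  obtain ⟨X, hXdef, hXtr⟩ := hcode 3 (by norm_num) E hHG
  refine ⟨X, hXdef, fun i j hij => ?_⟩
  have hb : ∀ z, (fun z => a (![2 * i, 2 * i + 1, 2 * j] z)) z ∈ A := fun z => haA _
  rw [← hXtr _ hb]
  constructor
  · rintro ⟨σ, i', j', hij', heq⟩
    have hr := range_eq_of_comp_perm ha σ heq
    have hr' : ∀ x : ℕ, (x = 2 * j ∨ x = 2 * i + 1 ∨ x = 2 * i) ↔
        (x = 2 * j' ∨ x = 2 * i' + 1 ∨ x = 2 * i') := by
      intro x
      have h1 : x ∈ Set.range ![2 * i, 2 * i + 1, 2 * j] ↔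
          x ∈ Set.range ![2 * i', 2 * i' + 1, 2 * j'] := by rw [hr]
      simpa using h1
    have e1 := (hr' (2 * i)).1 (by omega)
    have e2 := (hr' (2 * i + 1)).1 (by omega)
    have e3 := (hr' (2 * j)).1 (by omega)
    have e4 := (hr' (2 * i' + 1)).2 (by omega)
    have e5 := (hr' (2 * j')).2 (by omega)
    omega
  · intro hlt
    exact ⟨Equiv.refl _, i, j, hlt, rfl⟩

end Code

section Patterns

variable {k : ℕ}

private def NF (r : Fin k → Fin k) : Fin k → Fin k :=
  fun j => if r (r j) = r j then r j else j

private lemma NF_idem (r : Fin k → Fin k) (j : Fin k) : NF r (NF r j) = NF r j := by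
  simp only [NF]
  by_cases h : r (r j) = r j
  · simp only [if_pos h]
    have h2 : r (r (r j)) = r (r j) := by rw [h]; exact h
    rw [if_pos h2, h]
  · simp only [if_neg h]

private def FixF (r : Fin k → Fin k) : Finset (Fin k) :=
  Finset.univ.filter (fun j => NF r j = j)

private lemma NF_mem_FixF (r : Fin k → Fin k) (j : Fin k) : NF r j ∈ FixF r :=
  Finset.mem_filter.2 ⟨Finset.mem_univ _, NF_idem r j⟩

private def iotaF (r : Fin k → Fin k) : Fin (FixF r).card → Fin k :=
  fun i => ((FixF r).orderIsoOfFin rfl i : Fin k)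

private def piF (r : Fin k → Fin k) : Fin k → Fin (FixF r).card :=
  fun j => ((FixF r).orderIsoOfFin rfl).symm ⟨NF r j, NF_mem_FixF r j⟩

private lemma iotaF_piF (r : Fin k → Fin k) (j : Fin k) : iotaF r (piF r j) = NF r j := by
  simp [iotaF, piF]

private lemma NF_iotaF (r : Fin k → Fin k) (i : Fin (FixF r).card) :
    NF r (iotaF r i) = iotaF r i :=
  (Finset.mem_filter.1 ((FixF r).orderIsoOfFin rfl i).2).2

private lemma iotaF_inj (r : Fin k → Fin k) : Function.Injective (iotaF r) :=
  fun x y h => ((FixF r).orderIsoOfFin rfl).injective (Subtype.ext h)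

private lemma card_FixF_pos (hk : 1 ≤ k) (r : Fin k → Fin k) : 1 ≤ (FixF r).card :=
  Finset.card_pos.2 ⟨NF r ⟨0, hk⟩, NF_mem_FixF r ⟨0, hk⟩⟩

private def repF (g : Fin k → ℕ) : Fin k → Fin k :=
  fun j => (Finset.univ.filter (fun i => g i = g j)).min'
    ⟨j, Finset.mem_filter.2 ⟨Finset.mem_univ _, rfl⟩⟩

private lemma g_repF (g : Fin k → ℕ) (j : Fin k) : g (repF g j) = g j := by
  have h := Finset.min'_mem (Finset.univ.filter (fun i => g i = g j))
    ⟨j, Finset.mem_filter.2 ⟨Finset.mem_univ _, rfl⟩⟩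
  exact (Finset.mem_filter.1 h).2

private lemma repF_eq (g : Fin k → ℕ) {i j : Fin k} (h : g i = g j) : repF g i = repF g j := by
  apply le_antisymm
  · apply Finset.min'_le
    exact Finset.mem_filter.2 ⟨Finset.mem_univ _, (g_repF g j).trans h.symm⟩
  · apply Finset.min'_le
    exact Finset.mem_filter.2 ⟨Finset.mem_univ _, (g_repF g i).trans h⟩

private lemma repF_idem (g : Fin k → ℕ) (j : Fin k) : repF g (repF g j) = repF g j :=
  repF_eq g (g_repF g j)

private lemma repF_pattern (g : Fin k → ℕ) (i j : Fin k) :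
    g i = g j ↔ repF g i = repF g j := by
  constructor
  · exact repF_eq g
  · intro h
    rw [← g_repF g i, h, g_repF g j]

private lemma NF_repF (g : Fin k → ℕ) : NF (repF g) = repF g := by
  funext j
  simp only [NF]
  rw [if_pos (repF_idem g j)]

end Patterns

private def fsub {k : ℕ} (m : ℕ) (r : Fin k → Fin k) (τ : Equiv.Perm (Fin (FixF r).card)) :
    Fin (2 * (FixF r).card) × Fin m → Fin k × (Fin 2 × Fin m) :=
  fun p => (iotaF r (τ ⟨p.1.val / 2, by have := p.1.isLt; omega⟩),
            (⟨p.1.val % 2, by omega⟩, p.2))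

private def EqY {k m : ℕ} (M : Type*) (i j : Fin k) : Set (Fin k × (Fin 2 × Fin m) → M) :=
  {y | ∀ q : Fin 2 × Fin m, y (i, q) = y (j, q)}

private def f3 {k m : ℕ} (i j : Fin k) : Fin 3 × Fin m → Fin k × (Fin 2 × Fin m) :=
  fun p => (![i, i, j] p.1, (![0, 1, 0] p.1, p.2))

/-- If every hypergraph on an infinite set `A ⊆ M^m` is traced by a definable set, then there is
a sequence `(c_i)` of elements of `M^{2m}` such that every subset of `ω^k` is traced on it by a
definable set. -/
theorem arbitrary_sets_coded_of_hypergraphs_coded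
    (L : Language) (M : Type*) [L.Structure M] (m : ℕ)
    (A : Set (Fin m → M)) (hA : A.Infinite)
    (hcode : ∀ (k : ℕ), 2 ≤ k → ∀ E : (Fin k → Fin m → M) → Prop, IsHypergraphOn k A E →
      ∃ X : Set (Fin k × Fin m → M), Set.Definable (Set.univ : Set M) L X ∧
        ∀ a : Fin k → Fin m → M, (∀ i, a i ∈ A) →
          (E a ↔ (fun p : Fin k × Fin m => a p.1 p.2) ∈ X)) :
    ∃ c : ℕ → Fin 2 × Fin m → M,
      ∀ (k : ℕ), 1 ≤ k → ∀ S : Set (Fin k → ℕ),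
        ∃ Y : Set (Fin k × (Fin 2 × Fin m) → M), Set.Definable (Set.univ : Set M) L Y ∧
          ∀ g : Fin k → ℕ, g ∈ S ↔ (fun p : Fin k × (Fin 2 × Fin m) => c (g p.1) p.2) ∈ Y := by
  classical
  set a : ℕ → Fin m → M := fun n => (Set.Infinite.natEmbedding A hA n : Fin m → M) with ha_def
  have ha : Function.Injective a :=
    fun x y h => (Set.Infinite.natEmbedding A hA).injective (Subtype.coe_injective h)
  have haA : ∀ n, a n ∈ A := fun n => (Set.Infinite.natEmbedding A hA n).2
  obtain ⟨XO, hXOdef, hXO⟩ := order_code L M m A hcode a ha haA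
  set c : ℕ → Fin 2 × Fin m → M := fun i p => a (2 * i + (p.1 : ℕ)) p.2 with hc
  have hcinj : Function.Injective c := by
    intro x y h
    have h0 : a (2 * x) = a (2 * y) :=
      funext fun q => by simpa [hc] using congrFun h ((0 : Fin 2), q)
    have := ha h0
    omega
  refine ⟨c, ?_⟩
  intro k hk S
  -- the main hypergraph-coded sets, one for each pattern `r` and permutation `τ`
  have hXmain : ∀ (r : Fin k → Fin k) (τ : Equiv.Perm (Fin (FixF r).card)),
      ∃ X : Set (Fin (2 * (FixF r).card) × Fin m → M), Set.Definable (Set.univ : Set M) L X ∧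
        ∀ u : Fin (FixF r).card → ℕ, StrictMono u →
          ((fun p : Fin (2 * (FixF r).card) × Fin m => a (encIdx u p.1) p.2) ∈ X ↔
            (StrictMono u ∧ u ∘ ⇑τ⁻¹ ∘ piF r ∈ S)) :=
    fun r τ => strict_code L M m A hcode a ha haA _ (card_FixF_pos hk r)
      {u | StrictMono u ∧ u ∘ ⇑τ⁻¹ ∘ piF r ∈ S} (fun u hu => hu.1)
  choose XM hXMdef hXMtr using hXmain
  -- definability and semantics of coordinatewise equality
  have hEqYdef : ∀ i j : Fin k,
      Set.Definable (Set.univ : Set M) L (EqY M i j : Set (Fin k × (Fin 2 × Fin m) → M)) := by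
    intro i j
    have he : (EqY M i j : Set (Fin k × (Fin 2 × Fin m) → M)) =
        ⋂ q ∈ (Finset.univ : Finset (Fin 2 × Fin m)),
          {y : Fin k × (Fin 2 × Fin m) → M | y (i, q) = y (j, q)} := by
      ext y; simp [EqY]
    rw [he]
    apply Set.definable_biInter_finset
    intro q
    refine ⟨Term.equal (Term.var (i, q)) (Term.var (j, q)), ?_⟩
    ext y
    simp
  have hEqYsem : ∀ (g : Fin k → ℕ) (i j : Fin k),
      ((fun p : Fin k × (Fin 2 × Fin m) => c (g p.1) p.2) ∈
        (EqY M i j : Set (Fin k × (Fin 2 × Fin m) → M)) ↔ g i = g j) := by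
    intro g i j
    constructor
    · intro h
      exact hcinj (funext fun q => h q)
    · intro h q
      show c (g i) q = c (g j) q
      rw [h]
  -- semantics of the coded order relation
  have hLtYsem : ∀ (g : Fin k → ℕ) (i j : Fin k), g i ≠ g j →
      ((fun p : Fin k × (Fin 2 × Fin m) => c (g p.1) p.2) ∈
        (fun y : Fin k × (Fin 2 × Fin m) → M => y ∘ f3 i j) ⁻¹' XO ↔ g i < g j) := by
    intro g i j hne
    have key : (fun p : Fin k × (Fin 2 × Fin m) => c (g p.1) p.2) ∘ f3 i j =
        (fun p : Fin 3 × Fin m => a (![2 * g i, 2 * g i + 1, 2 * g j] p.1) p.2) := by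
      funext p
      obtain ⟨z, q⟩ := p
      fin_cases z <;> simp [f3, hc]
    rw [Set.mem_preimage, key]
    exact hXO (g i) (g j) hne
  -- semantics of the substitution map
  have hsub : ∀ (g : Fin k → ℕ) (r : Fin k → Fin k) (τ : Equiv.Perm (Fin (FixF r).card)),
      (fun p : Fin k × (Fin 2 × Fin m) => c (g p.1) p.2) ∘ fsub m r τ =
      (fun p : Fin (2 * (FixF r).card) × Fin m =>
        a (encIdx (fun i => g (iotaF r (τ i))) p.1) p.2) := by
    intro g r τ
    funext p
    simp only [Function.comp_apply, fsub, hc, encIdx]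
  -- the three families of definable pieces
  set PatS : (Fin k → Fin k) → Set (Fin k × (Fin 2 × Fin m) → M) := fun r =>
    ⋂ ij ∈ (Finset.univ : Finset (Fin k × Fin k)),
      (if NF r ij.1 = NF r ij.2 then EqY M ij.1 ij.2 else (EqY M ij.1 ij.2)ᶜ) with hPatS
  set OrdS : (r : Fin k → Fin k) → Equiv.Perm (Fin (FixF r).card) →
      Set (Fin k × (Fin 2 × Fin m) → M) := fun r τ =>
    ⋂ ij ∈ (Finset.univ : Finset (Fin (FixF r).card × Fin (FixF r).card)),
      (if ij.1 < ij.2 then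
        (fun y : Fin k × (Fin 2 × Fin m) → M =>
          y ∘ f3 (iotaF r (τ ij.1)) (iotaF r (τ ij.2))) ⁻¹' XO
      else Set.univ) with hOrdS
  set SubS : (r : Fin k → Fin k) → Equiv.Perm (Fin (FixF r).card) →
      Set (Fin k × (Fin 2 × Fin m) → M) := fun r τ =>
    (fun y : Fin k × (Fin 2 × Fin m) → M => y ∘ fsub m r τ) ⁻¹' XM r τ with hSubS
  -- semantics of the pieces
  have hPatIff : ∀ (g : Fin k → ℕ) (r : Fin k → Fin k),
      ((fun p : Fin k × (Fin 2 × Fin m) => c (g p.1) p.2) ∈ PatS r ↔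
        ∀ i j, g i = g j ↔ NF r i = NF r j) := by
    intro g r
    simp only [hPatS, Set.mem_iInter]
    constructor
    · intro h i j
      have h2 := h (i, j) (Finset.mem_univ _)
      by_cases hN : NF r i = NF r j
      · exact ⟨fun _ => hN, fun _ => (hEqYsem g i j).1 (by rwa [if_pos hN] at h2)⟩
      · rw [if_neg hN] at h2
        exact ⟨fun hg => absurd ((hEqYsem g i j).2 hg) h2, fun h3 => absurd h3 hN⟩
    · intro hp ij _
      by_cases hN : NF r ij.1 = NF r ij.2
      · rw [if_pos hN]
        exact (hEqYsem g _ _).2 ((hp ij.1 ij.2).2 hN)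
      · rw [if_neg hN]
        intro hmem
        exact hN ((hp _ _).1 ((hEqYsem g _ _).1 hmem))
  have hOrdIff : ∀ (g : Fin k → ℕ) (r : Fin k → Fin k) (τ : Equiv.Perm (Fin (FixF r).card)),
      Function.Injective (fun i => g (iotaF r (τ i))) →
      ((fun p : Fin k × (Fin 2 × Fin m) => c (g p.1) p.2) ∈ OrdS r τ ↔
        StrictMono fun i => g (iotaF r (τ i))) := by
    intro g r τ hinj
    simp only [hOrdS, Set.mem_iInter]
    constructor
    · intro h x y hxy
      have h2 := h (x, y) (Finset.mem_univ _)
      rw [if_pos hxy] at h2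
      have hne : g (iotaF r (τ x)) ≠ g (iotaF r (τ y)) :=
        fun he => absurd (hinj he) (ne_of_lt hxy)
      exact (hLtYsem g _ _ hne).1 h2
    · intro hmono ij _
      by_cases hxy : ij.1 < ij.2
      · rw [if_pos hxy]
        have hne : g (iotaF r (τ ij.1)) ≠ g (iotaF r (τ ij.2)) :=
          fun he => absurd (hinj he) (ne_of_lt hxy)
        exact (hLtYsem g _ _ hne).2 (hmono hxy)
      · rw [if_neg hxy]
        trivial
  have hSubIff : ∀ (g : Fin k → ℕ) (r : Fin k → Fin k) (τ : Equiv.Perm (Fin (FixF r).card)),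
      StrictMono (fun i => g (iotaF r (τ i))) →
      ((fun p : Fin k × (Fin 2 × Fin m) => c (g p.1) p.2) ∈ SubS r τ ↔
        (fun i => g (iotaF r (τ i))) ∘ ⇑τ⁻¹ ∘ piF r ∈ S) := by
    intro g r τ hmono
    simp only [hSubS, Set.mem_preimage]
    rw [hsub g r τ, hXMtr r τ _ hmono]
    exact and_iff_right hmono
  -- helper facts for functions matching a pattern
  have hstep : ∀ (g : Fin k → ℕ) (r : Fin k → Fin k),
      (∀ i j, g i = g j ↔ NF r i = NF r j) →
      ∀ τ : Equiv.Perm (Fin (FixF r).card),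
        (fun i => g (iotaF r (τ i))) ∘ ⇑τ⁻¹ ∘ piF r = g := by
    intro g r hpat τ
    funext j
    show g (iotaF r (τ (τ⁻¹ (piF r j)))) = g j
    rw [← Equiv.Perm.mul_apply, mul_inv_cancel, Equiv.Perm.one_apply, iotaF_piF]
    exact (hpat _ _).2 (by rw [NF_idem])
  have hginj : ∀ (g : Fin k → ℕ) (r : Fin k → Fin k),
      (∀ i j, g i = g j ↔ NF r i = NF r j) →
      Function.Injective (fun i => g (iotaF r i)) := by
    intro g r hpat x y h
    have h2 : NF r (iotaF r x) = NF r (iotaF r y) := (hpat _ _).1 h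
    rw [NF_iotaF, NF_iotaF] at h2
    exact iotaF_inj r h2
  -- the definable set coding `S`
  refine ⟨⋃ r ∈ (Finset.univ : Finset (Fin k → Fin k)),
      ⋃ τ ∈ (Finset.univ : Finset (Equiv.Perm (Fin (FixF r).card))),
        PatS r ∩ (OrdS r τ ∩ SubS r τ), ?_, ?_⟩
  · apply Set.definable_biUnion_finset
    intro r
    apply Set.definable_biUnion_finset
    intro τ
    refine Set.Definable.inter ?_ (Set.Definable.inter ?_ ?_)
    · simp only [hPatS]
      apply Set.definable_biInter_finset
      intro ij
      by_cases hN : NF r ij.1 = NF r ij.2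
      · rw [if_pos hN]; exact hEqYdef _ _
      · rw [if_neg hN]; exact (hEqYdef _ _).compl
    · simp only [hOrdS]
      apply Set.definable_biInter_finset
      intro ij
      by_cases hxy : ij.1 < ij.2
      · rw [if_pos hxy]; exact hXOdef.preimage_comp _
      · rw [if_neg hxy]; exact Set.definable_univ
    · simp only [hSubS]
      exact (hXMdef r τ).preimage_comp _
  · intro g
    constructor
    · -- g ∈ S → membership
      intro hS
      have hpat : ∀ i j, g i = g j ↔ NF (repF g) i = NF (repF g) j := by
        rw [NF_repF]
        exact fun i j => repF_pattern g i j
      have hinj : Function.Injective (fun i => g (iotaF (repF g) i)) := hginj g _ hpat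
      set τ : Equiv.Perm (Fin (FixF (repF g)).card) :=
        Tuple.sort (fun i => g (iotaF (repF g) i)) with hτ
      have hmono : StrictMono (fun i => g (iotaF (repF g) (τ i))) :=
        (Tuple.monotone_sort (fun i => g (iotaF (repF g) i))).strictMono_of_injective
          (hinj.comp τ.injective)
      refine Set.mem_biUnion (Finset.mem_univ (repF g)) ?_
      refine Set.mem_biUnion (Finset.mem_univ τ) ?_
      refine ⟨(hPatIff g _).2 hpat, (hOrdIff g _ τ (hinj.comp τ.injective)).2 hmono, ?_⟩
      apply (hSubIff g _ τ hmono).2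
      rw [hstep g _ hpat τ]
      exact hS
    · -- membership → g ∈ S
      intro hmem
      simp only [Set.mem_iUnion, Set.mem_inter_iff] at hmem
      obtain ⟨r, -, τ, -, hp, ho, hs⟩ := hmem
      have hpat := (hPatIff g r).1 hp
      have hinj : Function.Injective (fun i => g (iotaF r (τ i))) :=
        (hginj g r hpat).comp τ.injective
      have hmono := (hOrdIff g r τ hinj).1 ho
      have hfin := (hSubIff g r τ hmono).1 hs
      rwa [hstep g r hpat τ] at hfin
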